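/- Centralized and federated Gram-Schmidt orthonormalization are equivalent: let v : Fin k → EuclideanSpace ℝ N be a linearly independent family of vectors indexed by the sigma type N = (s : Fin S) × Fin (n s), and suppose the families ũ_i^s satisfy the federated recursion ũ_i^s = v_i^s − Σ_{j < i} r_{ij} • ũ_j^s with aggregated residuals r_{ij} = (Σ_t ⟨ũ_j^t, v_i^t⟩) / (Σ_t ⟨ũ_j^t, ũ_j^t⟩), and let ñ_i := Σ_t ⟨ũ_i^t, ũ_i^t⟩ be the aggregated squared norms. Then for every i and s, the federated normalized vector (1/√ñ_i) • ũ_i^s equals the local block (gramSchmidtNormed ℝ v i)^s of the centrally computed orthonormalized Gram-Schmidt vector. -/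

import Mathlib

open scoped RealInnerProductSpace

/-- Helper instance (provable from Mathlib) so that `gramSchmidtNormed` elaborates for
families indexed by `Fin k`. -/
instance finChainWellFoundedLT (k : ℕ) :
    @IsWellFounded (Fin k) (fun a b => @LT.lt _ (@Preorder.toLT _ (@PartialOrder.toPreorder _
      (@SemilatticeInf.toPartialOrder _ (@Lattice.toSemilatticeInf _
        (@DistribLattice.toLattice _ (@instDistribLatticeOfLinearOrder _
          Fin.instLinearOrder)))))) a b) :=
  inferInstanceAs (WellFoundedLT (Fin k))

/-- The local block `u^s = u ∘ Sigma.mk s` of a vertically partitioned vector `u` at site `s`. -/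
def localBlock {S : ℕ} {n : Fin S → ℕ}
    (u : EuclideanSpace ℝ ((s : Fin S) × Fin (n s))) (s : Fin S) :
    EuclideanSpace ℝ (Fin (n s)) :=
  WithLp.toLp 2 (fun j => u (Sigma.mk s j))

lemma localBlock_sub {S : ℕ} {n : Fin S → ℕ}
    (a b : EuclideanSpace ℝ ((s : Fin S) × Fin (n s))) (s : Fin S) :
    localBlock (a - b) s = localBlock a s - localBlock b s := by
  ext j; simp [localBlock]

lemma localBlock_smul {S : ℕ} {n : Fin S → ℕ} (c : ℝ)
    (a : EuclideanSpace ℝ ((s : Fin S) × Fin (n s))) (s : Fin S) :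
    localBlock (c • a) s = c • localBlock a s := by
  ext j; simp [localBlock]

lemma localBlock_sum {S : ℕ} {n : Fin S → ℕ} {ι : Type*} (T : Finset ι)
    (f : ι → EuclideanSpace ℝ ((s : Fin S) × Fin (n s))) (s : Fin S) :
    localBlock (∑ j ∈ T, f j) s = ∑ j ∈ T, localBlock (f j) s := by
  ext j'
  simp [localBlock, WithLp.ofLp_sum]

lemma inner_blocks {S : ℕ} {n : Fin S → ℕ}
    (a b : EuclideanSpace ℝ ((s : Fin S) × Fin (n s))) :
    (∑ t : Fin S, ⟪localBlock a t, localBlock b t⟫) = ⟪a, b⟫ := by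
  simp only [PiLp.inner_apply, RCLike.inner_apply, starRingEnd_apply, star_trivial, localBlock,
    PiLp.toLp_apply]
  rw [← Finset.univ_sigma_univ, Finset.sum_sigma]

/-- Centralized and federated Gram-Schmidt orthonormalization are equivalent (Proposition 2):
if the local families `ũ i s` satisfy the federated recursion with aggregated residuals, and
`ñ_i = Σ_t ⟪ũ_i^t, ũ_i^t⟫` are the aggregated squared norms, then the federated normalized
vectors `(1/√ñ_i) • ũ_i^s` equal the local blocks of the centrally computed orthonormalized
Gram-Schmidt vectors `gramSchmidtNormed ℝ v i`. -/
theorem federated_gramSchmidt_normed_eq_centralized (S k : ℕ) (n : Fin S → ℕ)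
    (v : Fin k → EuclideanSpace ℝ ((s : Fin S) × Fin (n s)))
    (hv : LinearIndependent ℝ v)
    (u : Fin k → (s : Fin S) → EuclideanSpace ℝ (Fin (n s)))
    (hrec : ∀ (i : Fin k) (s : Fin S), u i s =
      localBlock (v i) s -
        ∑ j ∈ Finset.Iio i,
          ((∑ t : Fin S, ⟪u j t, localBlock (v i) t⟫) /
            (∑ t : Fin S, ⟪u j t, u j t⟫)) • u j s) :
    ∀ (i : Fin k) (s : Fin S),
      (1 / Real.sqrt (∑ t : Fin S, ⟪u i t, u i t⟫)) • u i s =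
        localBlock (InnerProductSpace.gramSchmidtNormed ℝ v i) s := by
  have key : ∀ i : Fin k, ∀ s : Fin S, u i s = localBlock (InnerProductSpace.gramSchmidt ℝ v i) s := by
    intro i
    induction i using WellFoundedLT.induction with
    | _ i ih =>
      intro s
      have hg : localBlock (InnerProductSpace.gramSchmidt ℝ v i) s =
          localBlock (v i) s - ∑ j ∈ Finset.Iio i,
            (⟪InnerProductSpace.gramSchmidt ℝ v j, v i⟫ / ⟪InnerProductSpace.gramSchmidt ℝ v j, InnerProductSpace.gramSchmidt ℝ v j⟫) •
              localBlock (InnerProductSpace.gramSchmidt ℝ v j) s := by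
        rw [InnerProductSpace.gramSchmidt_def ℝ v i, localBlock_sub, localBlock_sum]
        congr 1
        refine Finset.sum_congr rfl fun j _ => ?_
        rw [Submodule.starProjection_singleton, localBlock_smul, real_inner_self_eq_norm_sq]
        norm_num
      rw [hrec i s, hg]
      congr 1
      refine Finset.sum_congr rfl fun j hj => ?_
      have hj' : j < i := Finset.mem_Iio.mp hj
      have huj : ∀ t, u j t = localBlock (InnerProductSpace.gramSchmidt ℝ v j) t := ih j hj'
      simp only [huj, inner_blocks]
  intro i s
  have hnorm : (∑ t : Fin S, ⟪u i t, u i t⟫) = ‖InnerProductSpace.gramSchmidt ℝ v i‖ ^ 2 := by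
    calc (∑ t : Fin S, ⟪u i t, u i t⟫)
        = ∑ t : Fin S, ⟪localBlock (InnerProductSpace.gramSchmidt ℝ v i) t, localBlock (InnerProductSpace.gramSchmidt ℝ v i) t⟫ := by
          simp only [key i]
      _ = ⟪InnerProductSpace.gramSchmidt ℝ v i, InnerProductSpace.gramSchmidt ℝ v i⟫ := inner_blocks _ _
      _ = ‖InnerProductSpace.gramSchmidt ℝ v i‖ ^ 2 := real_inner_self_eq_norm_sq _
  rw [key i s, hnorm, Real.sqrt_sq (norm_nonneg _), InnerProductSpace.gramSchmidtNormed, localBlock_smul,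
    one_div]
  norm_num
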